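/- With c given by the dispersion relation c = ((ρ₊-ρ₀)/(kρ₀))(√(Ω² + kgρ₀/(ρ₊-ρ₀)) - Ω) for ρ₊ > ρ₀ > 0, k, g, Ω > 0, the inequality kc - 2Ω > 0 holds if and only if k > (4Ω²/g)(1 + ρ₀/(ρ₊ - ρ₀)). -/
import Mathlib


theorem meridional_decay_wavenumber_bound
    (ρ₀ ρplus k g Ω : ℝ) (hρ₀ : 0 < ρ₀) (hρ : ρ₀ < ρplus) (hk : 0 < k) (hg : 0 < g) (hΩ : 0 < Ω)
    (c : ℝ)
    (hc : c = (ρplus - ρ₀) / (k * ρ₀) * (Real.sqrt (Ω ^ 2 + k * g * ρ₀ / (ρplus - ρ₀)) - Ω)) :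
    0 < k * c - 2 * Ω ↔ k > 4 * Ω ^ 2 / g * (1 + ρ₀ / (ρplus - ρ₀)) := by
  have hd : (0:ℝ) < ρplus - ρ₀ := by linarith
  set s := Real.sqrt (Ω ^ 2 + k * g * ρ₀ / (ρplus - ρ₀)) with hs
  have hx : (0:ℝ) ≤ Ω + 2 * Ω * ρ₀ / (ρplus - ρ₀) := by positivity
  have hkc : k * c - 2 * Ω
      = (ρplus - ρ₀) / ρ₀ * (s - (Ω + 2 * Ω * ρ₀ / (ρplus - ρ₀))) := by
    rw [hc]; field_simp; ring
  have h1 : 0 < k * c - 2 * Ω ↔ Ω + 2 * Ω * ρ₀ / (ρplus - ρ₀) < s := by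
    rw [hkc]
    constructor
    · intro h
      nlinarith [mul_pos (div_pos hd hρ₀) (show (0:ℝ) < 1 by norm_num)]
    · intro h
      have := div_pos hd hρ₀
      nlinarith
  rw [h1, hs, Real.lt_sqrt hx]
  have hd' : ρplus - ρ₀ ≠ 0 := ne_of_gt hd
  have key : Ω ^ 2 + k * g * ρ₀ / (ρplus - ρ₀) - (Ω + 2 * Ω * ρ₀ / (ρplus - ρ₀)) ^ 2
      = (k * g * (ρplus - ρ₀) - 4 * Ω ^ 2 * ρplus) * (ρ₀ / (ρplus - ρ₀) ^ 2) := by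
    field_simp; ring
  have key2 : k - 4 * Ω ^ 2 / g * (1 + ρ₀ / (ρplus - ρ₀))
      = (k * g * (ρplus - ρ₀) - 4 * Ω ^ 2 * ρplus) * (1 / (g * (ρplus - ρ₀))) := by
    field_simp; ring
  have hpos1 : 0 < ρ₀ / (ρplus - ρ₀) ^ 2 := by positivity
  have hpos2 : 0 < 1 / (g * (ρplus - ρ₀)) := by positivity
  constructor
  · intro h
    rw [← sub_pos] at h
    rw [key] at h
    rw [gt_iff_lt, ← sub_pos, key2]
    exact mul_pos ((mul_pos_iff_of_pos_right hpos1).mp h) hpos2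
  · intro h
    rw [gt_iff_lt, ← sub_pos, key2] at h
    rw [← sub_pos, key]
    exact mul_pos ((mul_pos_iff_of_pos_right hpos2).mp h) hpos1
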